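/- Let x ∈ R^n and α > 0. If D = {d_1,...,d_p} ⊂ R^n is a positive spanning set with cosine measure cm(D) ≥ κ > 0 and ‖d_i‖ ≥ d_min·α for all i with d_min > 0, then D is a Λ-PSS for B(x,α) with Λ = 1/(d_min·κ). -/

import Mathlib

open RealInnerProductSpace

/-- If D is a PSS with cosine measure at least κ > 0 and ‖dᵢ‖ ≥ d_min·α for all i,
then D is a Λ-PSS for B(x,α) with Λ = 1/(d_min·κ). -/
theorem cosine_measure_implies_lambda_pss (n p : ℕ)
    (x : EuclideanSpace ℝ (Fin n)) (α κ dmin : ℝ)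
    (hα : 0 < α) (hκ : 0 < κ) (hdmin : 0 < dmin)
    (d : Fin p → EuclideanSpace ℝ (Fin n))
    (hpss : ∀ v : EuclideanSpace ℝ (Fin n), ∃ c : Fin p → ℝ,
      (∀ i, 0 ≤ c i) ∧ v = ∑ i, c i • d i)
    (hcm : ∀ v : EuclideanSpace ℝ (Fin n), v ≠ 0 →
      ∃ i, d i ≠ 0 ∧ κ * (‖d i‖ * ‖v‖) ≤ ⟪d i, v⟫)
    (hnorm : ∀ i, dmin * α ≤ ‖d i‖) :
    ∀ v : EuclideanSpace ℝ (Fin n), ‖v‖ ≤ α →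
      ∃ c : Fin p → ℝ, (∀ i, 0 ≤ c i) ∧ v = ∑ i, c i • d i ∧
        ∑ i, c i ≤ 1 / (dmin * κ) := by
  intro v hv
  set Λ : ℝ := 1 / (dmin * κ) with hΛdef
  have hΛpos : 0 < Λ := by positivity
  by_contra hcon
  push_neg at hcon
  -- the set of admissible coefficient vectors
  set K : Set (Fin p → ℝ) := {c | (∀ i, 0 ≤ c i) ∧ ∑ i, c i ≤ Λ} with hKdef
  set f : (Fin p → ℝ) → EuclideanSpace ℝ (Fin n) := fun c => ∑ i, c i • d i with hfdef
  set C : Set (EuclideanSpace ℝ (Fin n)) := f '' K with hCdef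
  have hKcompact : IsCompact K := by
    have hsub : K ⊆ Set.pi Set.univ (fun _ : Fin p => Set.Icc (0:ℝ) Λ) := by
      intro c hc
      intro i _
      refine ⟨hc.1 i, ?_⟩
      calc c i ≤ ∑ j, c j := Finset.single_le_sum (fun j _ => hc.1 j) (Finset.mem_univ i)
        _ ≤ Λ := hc.2
    have hclosed : IsClosed K := by
      have h1 : IsClosed {c : Fin p → ℝ | ∀ i, 0 ≤ c i} := by
        have : {c : Fin p → ℝ | ∀ i, 0 ≤ c i} = ⋂ i, {c | 0 ≤ c i} := by
          ext c; simp
        rw [this]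
        exact isClosed_iInter fun i => isClosed_le continuous_const (continuous_apply i)
      have h2 : IsClosed {c : Fin p → ℝ | ∑ i, c i ≤ Λ} :=
        isClosed_le (by continuity) continuous_const
      exact h1.inter h2
    exact (isCompact_univ_pi fun _ => isCompact_Icc).of_isClosed_subset hclosed hsub
  have hfcont : Continuous f := by
    apply continuous_finset_sum
    intro i _
    exact (continuous_apply i).smul continuous_const
  have hCcompact : IsCompact C := hKcompact.image hfcont
  have hCconvex : Convex ℝ C := by
    rintro _ ⟨c1, hc1, rfl⟩ _ ⟨c2, hc2, rfl⟩ a b ha hb hab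
    refine ⟨fun i => a * c1 i + b * c2 i, ⟨fun i => add_nonneg (mul_nonneg ha (hc1.1 i)) (mul_nonneg hb (hc2.1 i)), ?_⟩, ?_⟩
    · calc ∑ i, (a * c1 i + b * c2 i) = a * ∑ i, c1 i + b * ∑ i, c2 i := by
            rw [Finset.sum_add_distrib, ← Finset.mul_sum, ← Finset.mul_sum]
        _ ≤ a * Λ + b * Λ := by
            gcongr
            exacts [hc1.2, hc2.2]
        _ = Λ := by rw [← add_mul, hab, one_mul]
    · simp only [hfdef, add_smul, mul_smul, Finset.sum_add_distrib, Finset.smul_sum]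
  have hCnonempty : C.Nonempty := ⟨f 0, 0, ⟨fun i => le_refl 0, by simp [hΛpos.le]⟩, rfl⟩
  have hvC : v ∉ C := by
    rintro ⟨c, hc, hfc⟩
    exact absurd hc.2 (not_le.mpr (hcon c hc.1 hfc.symm))
  -- nearest point
  obtain ⟨w₀, hw₀C, hw₀⟩ := exists_norm_eq_iInf_of_complete_convex hCnonempty
    hCcompact.isClosed.isComplete hCconvex v
  rw [norm_eq_iInf_iff_real_inner_le_zero hCconvex hw₀C] at hw₀
  set y : EuclideanSpace ℝ (Fin n) := v - w₀ with hydef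
  have hyne : y ≠ 0 := sub_ne_zero.mpr (fun h => hvC (h ▸ hw₀C))
  obtain ⟨i, hdne, hcmi⟩ := hcm y hyne
  -- the element Λ • d i belongs to C
  have hmem : (Λ : ℝ) • d i ∈ C := by
    refine ⟨fun j => if j = i then Λ else 0, ⟨fun j => by by_cases h : j = i <;> simp [h, hΛpos.le], ?_⟩, ?_⟩
    · simp
    · simp [hfdef, Finset.sum_ite_eq', Finset.mem_univ]
  have hkey : ⟪y, Λ • d i - w₀⟫ ≤ 0 := hw₀ _ hmem
  have hinner : ⟪y, Λ • d i⟫ ≤ ⟪y, v⟫ - ‖y‖ ^ 2 := by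
    have h1 : ⟪y, Λ • d i⟫ - ⟪y, w₀⟫ ≤ 0 := by rwa [← inner_sub_right]
    have h2 : ⟪y, w₀⟫ = ⟪y, v⟫ - ‖y‖ ^ 2 := by
      have : (w₀ : EuclideanSpace ℝ (Fin n)) = v - y := by rw [hydef]; abel
      rw [this, inner_sub_right, real_inner_self_eq_norm_sq]
    linarith
  have hlow : α * ‖y‖ ≤ ⟪y, Λ • d i⟫ := by
    rw [inner_smul_right]
    have h3 : κ * (‖d i‖ * ‖y‖) ≤ ⟪y, d i⟫ := by rwa [real_inner_comm]
    have h4 : κ * ((dmin * α) * ‖y‖) ≤ κ * (‖d i‖ * ‖y‖) := by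
      gcongr
      exact hnorm i
    have h5 : Λ * (κ * ((dmin * α) * ‖y‖)) = α * ‖y‖ := by
      field_simp [hΛdef]
      rw [hΛdef]; field_simp [hdmin.ne', hκ.ne']
    calc α * ‖y‖ = Λ * (κ * ((dmin * α) * ‖y‖)) := h5.symm
      _ ≤ Λ * ⟪y, d i⟫ := by
          exact mul_le_mul_of_nonneg_left (le_trans h4 h3) hΛpos.le
  have hup : ⟪y, v⟫ ≤ α * ‖y‖ := by
    calc ⟪y, v⟫ ≤ ‖y‖ * ‖v‖ := real_inner_le_norm y v
      _ ≤ ‖y‖ * α := by gcongr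
      _ = α * ‖y‖ := mul_comm _ _
  have hy2 : ‖y‖ ^ 2 ≤ 0 := by linarith
  have : ‖y‖ = 0 := by nlinarith [norm_nonneg y]
  exact hyne (norm_eq_zero.mp this)
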